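/- Let δ ∈ [0, 1/2], let Y be a {0,1}-valued random variable, let W be a random variable taking values in a finite type, and let N be a {0,1}-valued random variable with P(N = 1) = δ that is independent of the pair (Y, W). Set X = Y ⊕ N. Then H(X | W) ≥ h2(δ ⋆ h2⁻¹(H(Y | W))). (This is the evaluation of Witsenhausen's conditional entropy bound for the binary symmetric channel: among all W forming a Markov chain X − Y − W with H(Y | W) fixed, the conditional entropy H(X | W) is at least h2(δ ⋆ h2⁻¹(H(Y | W))).) -/

import Mathlib

open MeasureTheory

/-- Binary entropy function (base 2), with the convention `0 * log₂ 0 = 0`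
(automatic since `Real.logb 2 0 = 0`). -/
noncomputable def h2 (p : ℝ) : ℝ :=
  -(p * Real.logb 2 p) - (1 - p) * Real.logb 2 (1 - p)

/-- Inverse of the binary entropy function: for `q ≥ 0`, the unique `r ∈ [0, 1/2]`
with `h2 r = q` (realized as the infimum of the solution set); `0` for `q < 0`. -/
noncomputable def h2inv (q : ℝ) : ℝ :=
  if q < 0 then 0 else sInf {r : ℝ | 0 ≤ r ∧ r ≤ 1 / 2 ∧ h2 r = q}

/-- Binary convolution `a ⋆ b = a(1-b) + (1-a)b`. -/
def bconv (a b : ℝ) : ℝ := a * (1 - b) + (1 - a) * b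

/-- Shannon entropy (base 2, in bits) of a random variable `X` with values in a
finite type, with respect to the measure `μ`. -/
noncomputable def H2 {Ω S : Type*} [MeasurableSpace Ω] [Fintype S]
    (μ : Measure Ω) (X : Ω → S) : ℝ :=
  -∑ s : S, (μ (X ⁻¹' {s})).toReal * Real.logb 2 (μ (X ⁻¹' {s})).toReal

/-- Mutual information (base 2, in bits): `I(X;Y) = H(X) + H(Y) - H(X,Y)`. -/
noncomputable def MI2 {Ω S T : Type*} [MeasurableSpace Ω] [Fintype S] [Fintype T]
    (μ : Measure Ω) (X : Ω → S) (Y : Ω → T) : ℝ :=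
  H2 μ X + H2 μ Y - H2 μ (fun ω => (X ω, Y ω))

/-- Conditional entropy (base 2, in bits): `H(X|W) = H(X,W) - H(W)`. -/
noncomputable def condH2 {Ω S T : Type*} [MeasurableSpace Ω] [Fintype S] [Fintype T]
    (μ : Measure Ω) (X : Ω → S) (W : Ω → T) : ℝ :=
  H2 μ (fun ω => (X ω, W ω)) - H2 μ W

/-- Conditional mutual information (base 2, in bits):
`I(X;Y|Z) = H(X|Z) + H(Y|Z) - H(X,Y|Z)`. -/
noncomputable def condMI2 {Ω S T V : Type*} [MeasurableSpace Ω] [Fintype S] [Fintype T]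
    [Fintype V] (μ : Measure Ω) (X : Ω → S) (Y : Ω → T) (Z : Ω → V) : ℝ :=
  condH2 μ X Z + condH2 μ Y Z - condH2 μ (fun ω => (X ω, Y ω)) Z


open Real Set

lemma log2_pos : 0 < Real.log 2 := Real.log_pos one_lt_two

lemma h2_eq (p : ℝ) : h2 p = Real.binEntropy p / Real.log 2 := by
  simp only [h2, Real.binEntropy, Real.logb, Real.log_inv]
  ring

lemma h2_zero : h2 0 = 0 := by simp [h2_eq]

lemma h2_half : h2 (1/2 : ℝ) = 1 := by
  rw [h2_eq, one_div, Real.binEntropy_two_inv, div_self log2_pos.ne']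

lemma h2_one_sub (p : ℝ) : h2 (1 - p) = h2 p := by
  rw [h2_eq, h2_eq, Real.binEntropy_one_sub]

lemma h2_strictMonoOn : StrictMonoOn h2 (Icc 0 (1/2 : ℝ)) := by
  intro x hx y hy hxy
  rw [h2_eq, h2_eq]
  rw [one_div] at hx hy
  exact div_lt_div_of_pos_right (Real.binEntropy_strictMonoOn hx hy hxy) log2_pos

lemma h2_monotoneOn : MonotoneOn h2 (Icc 0 (1/2 : ℝ)) := h2_strictMonoOn.monotoneOn

lemma h2_nonneg {p : ℝ} (h0 : 0 ≤ p) (h1 : p ≤ 1) : 0 ≤ h2 p := by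
  rw [h2_eq]; exact div_nonneg (Real.binEntropy_nonneg h0 h1) log2_pos.le

lemma h2_le_one (p : ℝ) : h2 p ≤ 1 := by
  rw [h2_eq, div_le_one log2_pos]; exact Real.binEntropy_le_log_two

lemma h2_mem01 {p : ℝ} (h0 : 0 ≤ p) (h1 : p ≤ 1) : h2 p ∈ Icc (0:ℝ) 1 :=
  ⟨h2_nonneg h0 h1, h2_le_one p⟩

lemma h2_continuous : Continuous h2 := by
  have : h2 = fun p => Real.binEntropy p / Real.log 2 := funext h2_eq
  rw [this]; exact Real.binEntropy_continuous.div_const _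

lemma hasDerivAt_h2 {p : ℝ} (hp0 : p ≠ 0) (hp1 : p ≠ 1) :
    HasDerivAt h2 ((Real.log (1 - p) - Real.log p) / Real.log 2) p := by
  have : h2 = fun p => Real.binEntropy p / Real.log 2 := funext h2_eq
  rw [this]
  exact (Real.hasDerivAt_binEntropy hp0 hp1).div_const _

-- h2inv
lemma h2inv_exists {q : ℝ} (hq : q ∈ Icc (0:ℝ) 1) : ∃ r ∈ Icc (0:ℝ) (1/2), h2 r = q := by
  have h := intermediate_value_Icc (by norm_num : (0:ℝ) ≤ 1/2) h2_continuous.continuousOn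
  rw [h2_zero, h2_half] at h
  exact h hq

lemma h2inv_spec {q : ℝ} (hq : q ∈ Icc (0:ℝ) 1) :
    h2inv q ∈ Icc (0:ℝ) (1/2) ∧ h2 (h2inv q) = q := by
  obtain ⟨r, hr, hrq⟩ := h2inv_exists hq
  have hset : {r' : ℝ | 0 ≤ r' ∧ r' ≤ 1 / 2 ∧ h2 r' = q} = {r} := by
    ext r'
    simp only [Set.mem_setOf_eq, Set.mem_singleton_iff]
    constructor
    · rintro ⟨h0, h1, he⟩
      exact h2_strictMonoOn.injOn ⟨h0, h1⟩ hr (he.trans hrq.symm)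
    · rintro rfl; exact ⟨hr.1, hr.2, hrq⟩
  rw [h2inv, if_neg (not_lt.2 hq.1), hset, csInf_singleton]
  exact ⟨hr, hrq⟩

lemma h2_h2inv {q : ℝ} (hq : q ∈ Icc (0:ℝ) 1) : h2 (h2inv q) = q := (h2inv_spec hq).2

lemma h2inv_mem {q : ℝ} (hq : q ∈ Icc (0:ℝ) 1) : h2inv q ∈ Icc (0:ℝ) (1/2) := (h2inv_spec hq).1

lemma h2inv_h2 {p : ℝ} (hp : p ∈ Icc (0:ℝ) (1/2)) : h2inv (h2 p) = p := by
  have hq : h2 p ∈ Icc (0:ℝ) 1 := by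
    constructor
    · exact h2_nonneg hp.1 (by linarith [hp.2])
    · exact h2_le_one p
  obtain ⟨hm, he⟩ := h2inv_spec hq
  exact h2_strictMonoOn.injOn hm hp he

lemma h2inv_strictMonoOn : StrictMonoOn h2inv (Icc (0:ℝ) 1) := by
  intro x hx y hy hxy
  by_contra h
  push_neg at h
  have := h2_monotoneOn (h2inv_mem hy) (h2inv_mem hx) h
  rw [h2_h2inv hx, h2_h2inv hy] at this
  linarith

lemma h2inv_monotoneOn : MonotoneOn h2inv (Icc (0:ℝ) 1) := h2inv_strictMonoOn.monotoneOn

lemma h2inv_zero : h2inv 0 = 0 := by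
  have := h2inv_h2 (p := 0) (by norm_num)
  rwa [h2_zero] at this

lemma h2inv_one : h2inv 1 = 1/2 := by
  have := h2inv_h2 (p := 1/2) (by norm_num)
  rwa [h2_half] at this

lemma h2inv_mem_Ioo {q : ℝ} (hq : q ∈ Ioo (0:ℝ) 1) : h2inv q ∈ Ioo (0:ℝ) (1/2) := by
  have hm := h2inv_mem ⟨hq.1.le, hq.2.le⟩
  constructor
  · rcases hm.1.lt_or_eq with h | h
    · exact h
    · exfalso
      have := h2_h2inv (q := q) ⟨hq.1.le, hq.2.le⟩
      rw [← h, h2_zero] at this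
      linarith [hq.1]
  · rcases hm.2.lt_or_eq with h | h
    · exact h
    · exfalso
      have := h2_h2inv (q := q) ⟨hq.1.le, hq.2.le⟩
      rw [h, h2_half] at this
      linarith [hq.2]

lemma bconv_eq (a b : ℝ) : bconv a b = a + (1 - 2*a) * b := by unfold bconv; ring

-- the auxiliary function φ(p) = p(1-p)(log(1-p) - log p)
noncomputable def mgPhi (p : ℝ) : ℝ := p * (1 - p) * (Real.log (1 - p) - Real.log p)

lemma mgPhi_eq (p : ℝ) :
    mgPhi p = (1 - p) * Real.negMulLog p - p * Real.negMulLog (1 - p) := by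
  unfold mgPhi Real.negMulLog; ring

lemma mgPhi_continuous : Continuous mgPhi := by
  have : mgPhi = fun p => (1 - p) * Real.negMulLog p - p * Real.negMulLog (1 - p) :=
    funext mgPhi_eq
  rw [this]
  fun_prop

lemma hasDerivAt_mgPhi {p : ℝ} (hp0 : p ≠ 0) (hp1 : p ≠ 1) :
    HasDerivAt mgPhi ((1 - 2*p) * (Real.log (1 - p) - Real.log p) - 1) p := by
  have h1 : HasDerivAt (fun p : ℝ => p * (1 - p)) (1 - 2*p) p := by
    have := (hasDerivAt_id p).mul ((hasDerivAt_id p).const_sub 1)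
    refine this.congr_deriv ?_; simp [id_eq]; ring
  have h1p : (1:ℝ) - p ≠ 0 := sub_ne_zero.2 (Ne.symm hp1)
  have h2a : HasDerivAt (fun p : ℝ => Real.log (1 - p)) ((1-p)⁻¹ * (-1)) p :=
    (Real.hasDerivAt_log h1p).comp p ((hasDerivAt_id p).const_sub 1)
  have h2b : HasDerivAt (fun p : ℝ => Real.log (1 - p) - Real.log p)
      ((1-p)⁻¹ * (-1) - p⁻¹) p := h2a.sub (Real.hasDerivAt_log hp0)
  have := h1.mul h2b
  refine this.congr_deriv ?_
  field_simp
  ring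

lemma mgPhi_half : mgPhi (1/2 : ℝ) = 0 := by norm_num [mgPhi]

lemma mgL_nonneg {p : ℝ} (h0 : 0 < p) (h2 : p ≤ 1/2) : 0 ≤ Real.log (1 - p) - Real.log p :=
  sub_nonneg.2 (Real.log_le_log h0 (by linarith))

lemma mgPhi_concave : ConcaveOn ℝ (Icc (0:ℝ) (1/2)) mgPhi := by
  apply AntitoneOn.concaveOn_of_deriv (convex_Icc 0 (1/2)) mgPhi_continuous.continuousOn
  · rw [interior_Icc]
    intro x hx
    exact (hasDerivAt_mgPhi (ne_of_gt hx.1) (by linarith [hx.2])).differentiableAt.differentiableWithinAt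
  · rw [interior_Icc]
    intro x hx y hy hxy
    rw [(hasDerivAt_mgPhi (ne_of_gt hx.1) (by linarith [hx.2])).deriv,
        (hasDerivAt_mgPhi (ne_of_gt hy.1) (by linarith [hy.2])).deriv]
    have hLx : 0 ≤ Real.log (1 - x) - Real.log x := mgL_nonneg hx.1 hx.2.le
    have hLy : Real.log (1 - y) - Real.log y ≤ Real.log (1 - x) - Real.log x := by
      have := Real.log_le_log hx.1 hxy
      have := Real.log_le_log (by linarith [hy.2] : (0:ℝ) < 1 - y) (by linarith : 1 - y ≤ 1 - x)
      linarith
    nlinarith [hx.2, hy.2, hxy]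

noncomputable def mgU (r : ℝ) : ℝ := Real.log (1 - r) - Real.log r
noncomputable def mgV (δ r : ℝ) : ℝ :=
  Real.log (1 - (δ + (1 - 2*δ)*r)) - Real.log (δ + (1 - 2*δ)*r)
noncomputable def mgG (δ r : ℝ) : ℝ := mgV δ r / mgU r

lemma mgU_pos {r : ℝ} (hr : r ∈ Ioo (0:ℝ) (1/2)) : 0 < mgU r :=
  sub_pos.2 (Real.log_lt_log hr.1 (by linarith [hr.2]))

section main
variable {δ : ℝ} (hδ0 : 0 < δ) (hδh : δ < 1/2)

include hδ0 hδh in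
lemma mgS_mem {r : ℝ} (hr : r ∈ Ioo (0:ℝ) (1/2)) :
    δ + (1 - 2*δ)*r ∈ Ioo (0:ℝ) (1/2) := by
  constructor
  · nlinarith [hr.1, hr.2]
  · nlinarith [hr.1, hr.2]

include hδ0 hδh in
lemma mgKey {r : ℝ} (hr : r ∈ Ioo (0:ℝ) (1/2)) :
    (1 - 2*δ) * mgPhi r ≤ mgPhi (δ + (1 - 2*δ)*r) := by
  have h := mgPhi_concave.2 (x := r) ⟨hr.1.le, hr.2.le⟩ (y := 1/2)
    (by constructor <;> norm_num)
    (by linarith : (0:ℝ) ≤ 1 - 2*δ) (by linarith : (0:ℝ) ≤ 2*δ) (by ring)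
  rw [smul_eq_mul, smul_eq_mul, smul_eq_mul, smul_eq_mul, mgPhi_half] at h
  have harg : (1 - 2*δ) * r + 2*δ * (1/2) = δ + (1 - 2*δ)*r := by ring
  rw [harg] at h
  linarith

include hδ0 hδh in
lemma hasDerivAt_mgG {r : ℝ} (hr : r ∈ Ioo (0:ℝ) (1/2)) :
    HasDerivAt (mgG δ)
      ((((1 - (δ + (1-2*δ)*r))⁻¹ * (-(1-2*δ)) - (δ + (1-2*δ)*r)⁻¹ * (1-2*δ)) * mgU r
        - mgV δ r * ((1-r)⁻¹ * (-1) - r⁻¹)) / (mgU r)^2) r := by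
  have hs := mgS_mem hδ0 hδh hr
  set s := δ + (1-2*δ)*r with hs_def
  have hs0 : s ≠ 0 := ne_of_gt hs.1
  have hs1 : (1:ℝ) - s ≠ 0 := by have := hs.2; intro h; nlinarith [hs.2]
  have hr0 : r ≠ 0 := ne_of_gt hr.1
  have hr1 : (1:ℝ) - r ≠ 0 := by have := hr.2; intro h; nlinarith [hr.2]
  have hin : HasDerivAt (fun r : ℝ => δ + (1-2*δ)*r) (1-2*δ) r := by
    simpa using ((hasDerivAt_id r).const_mul (1-2*δ)).const_add δ
  have hv : HasDerivAt (mgV δ)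
      ((1 - s)⁻¹ * (-(1-2*δ)) - s⁻¹ * (1-2*δ)) r := by
    have ha : HasDerivAt (fun r : ℝ => Real.log (1 - (δ + (1-2*δ)*r)))
        ((1 - s)⁻¹ * (-(1-2*δ))) r := by
      have hone : HasDerivAt (fun r : ℝ => 1 - (δ + (1-2*δ)*r)) (-(1-2*δ)) r :=
        hin.const_sub 1
      exact (Real.hasDerivAt_log hs1).comp r hone
    have hb : HasDerivAt (fun r : ℝ => Real.log (δ + (1-2*δ)*r)) (s⁻¹ * (1-2*δ)) r :=
      by exact (Real.hasDerivAt_log hs0).comp r hin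
    exact ha.sub hb
  have hu : HasDerivAt mgU ((1-r)⁻¹ * (-1) - r⁻¹) r := by
    have ha : HasDerivAt (fun r : ℝ => Real.log (1 - r)) ((1-r)⁻¹ * (-1)) r :=
      (Real.hasDerivAt_log hr1).comp r ((hasDerivAt_id r).const_sub 1)
    exact ha.sub (Real.hasDerivAt_log hr0)
  exact hv.div hu (ne_of_gt (mgU_pos hr))

include hδ0 hδh in
lemma mgG_deriv_nonneg {r : ℝ} (hr : r ∈ Ioo (0:ℝ) (1/2)) :
    0 ≤ deriv (mgG δ) r := by
  rw [(hasDerivAt_mgG hδ0 hδh hr).deriv]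
  have hs := mgS_mem hδ0 hδh hr
  set s := δ + (1-2*δ)*r with hs_def
  have key := mgKey hδ0 hδh hr
  have hphi_r : mgPhi r = r * (1-r) * mgU r := rfl
  have hphi_s : mgPhi s = s * (1-s) * mgV δ r := rfl
  have hr0 : r ≠ 0 := ne_of_gt hr.1
  have h1r : (0:ℝ) < 1 - r := by linarith [hr.2]
  have hr1 : (1:ℝ) - r ≠ 0 := ne_of_gt h1r
  have hs0 : s ≠ 0 := ne_of_gt hs.1
  have h1s : (0:ℝ) < 1 - s := by linarith [hs.2]
  have hs1 : (1:ℝ) - s ≠ 0 := ne_of_gt h1s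
  apply div_nonneg _ (sq_nonneg _)
  have hnum : ((1 - s)⁻¹ * (-(1-2*δ)) - s⁻¹ * (1-2*δ)) * mgU r
      - mgV δ r * ((1-r)⁻¹ * (-1) - r⁻¹)
      = (s * (1-s) * mgV δ r - (1-2*δ) * (r * (1-r) * mgU r))
        / (r * (1-r) * (s * (1-s))) := by
    field_simp
    ring
  rw [hnum]
  apply div_nonneg
  · rw [← hphi_r, ← hphi_s]; linarith
  · exact le_of_lt (mul_pos (mul_pos hr.1 h1r) (mul_pos hs.1 h1s))

include hδ0 hδh in
lemma mgG_mono : MonotoneOn (mgG δ) (Ioo (0:ℝ) (1/2)) := by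
  apply monotoneOn_of_deriv_nonneg (convex_Ioo 0 (1/2))
  · intro x hx
    exact (hasDerivAt_mgG hδ0 hδh hx).continuousAt.continuousWithinAt
  · rw [interior_Ioo]
    intro x hx
    exact (hasDerivAt_mgG hδ0 hδh hx).differentiableAt.differentiableWithinAt
  · rw [interior_Ioo]
    intro x hx
    exact mgG_deriv_nonneg hδ0 hδh hx

end main

noncomputable def mgF (δ q : ℝ) : ℝ := h2 (bconv δ (h2inv q))

lemma mgF_eq (δ q : ℝ) : mgF δ q = h2 (δ + (1 - 2*δ) * h2inv q) := by
  rw [mgF, bconv_eq]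

lemma h2inv_continuousAt {q : ℝ} (hq : q ∈ Ioo (0:ℝ) 1) : ContinuousAt h2inv q := by
  apply h2inv_strictMonoOn.continuousAt_of_image_mem_nhds (Icc_mem_nhds hq.1 hq.2)
  have himg : Icc (0:ℝ) (1/2) ⊆ h2inv '' Icc 0 1 := by
    intro p hp
    exact ⟨h2 p, h2_mem01 hp.1 (hp.2.trans (by norm_num)), h2inv_h2 hp⟩
  have hm := h2inv_mem_Ioo hq
  exact Filter.mem_of_superset (Icc_mem_nhds hm.1 hm.2) himg

lemma hasDerivAt_h2inv {q : ℝ} (hq : q ∈ Ioo (0:ℝ) 1) :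
    HasDerivAt h2inv ((mgU (h2inv q) / Real.log 2)⁻¹) q := by
  have hm := h2inv_mem_Ioo hq
  have hd : HasDerivAt h2 (mgU (h2inv q) / Real.log 2) (h2inv q) := by
    have := hasDerivAt_h2 (p := h2inv q) (ne_of_gt hm.1) (by intro h; rw [h] at hm; norm_num at hm)
    exact this
  apply HasDerivAt.of_local_left_inverse (h2inv_continuousAt hq) hd
  · exact ne_of_gt (div_pos (mgU_pos hm) log2_pos)
  · exact Filter.eventually_of_mem (Ioo_mem_nhds hq.1 hq.2)
      (fun y hy => h2_h2inv ⟨hy.1.le, hy.2.le⟩)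

section main2
variable {δ : ℝ} (hδ0 : 0 < δ) (hδh : δ < 1/2)

include hδ0 hδh in
lemma hasDerivAt_mgF {q : ℝ} (hq : q ∈ Ioo (0:ℝ) 1) :
    HasDerivAt (mgF δ) ((1 - 2*δ) * mgG δ (h2inv q)) q := by
  have hm := h2inv_mem_Ioo hq
  have hsm := mgS_mem hδ0 hδh hm
  have hin : HasDerivAt (fun q : ℝ => δ + (1 - 2*δ) * h2inv q)
      ((1 - 2*δ) * (mgU (h2inv q) / Real.log 2)⁻¹) q :=
    ((hasDerivAt_h2inv hq).const_mul (1 - 2*δ)).const_add δ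
  have hout : HasDerivAt h2 (mgV δ (h2inv q) / Real.log 2) (δ + (1 - 2*δ) * h2inv q) := by
    have := hasDerivAt_h2 (p := δ + (1 - 2*δ) * h2inv q)
      (ne_of_gt hsm.1) (by intro h; rw [h] at hsm; norm_num at hsm)
    exact this
  have hcomp := hout.comp q hin
  have hF : mgF δ = (fun q => h2 (δ + (1 - 2*δ) * h2inv q)) := funext (mgF_eq δ)
  rw [hF]
  refine hcomp.congr_deriv ?_
  rw [mgG]
  have hu := ne_of_gt (mgU_pos hm)
  field_simp

include hδ0 hδh in
lemma mgF_strictMonoOn : StrictMonoOn (mgF δ) (Icc (0:ℝ) 1) := by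
  intro x hx y hy hxy
  rw [mgF_eq, mgF_eq]
  have hrx := h2inv_mem hx
  have hry := h2inv_mem hy
  have hr : h2inv x < h2inv y := h2inv_strictMonoOn hx hy hxy
  apply h2_strictMonoOn
  · constructor <;> nlinarith [hrx.1, hrx.2]
  · constructor <;> nlinarith [hry.1, hry.2]
  · nlinarith

lemma mgF_zero : mgF δ 0 = h2 δ := by
  rw [mgF_eq, h2inv_zero]; ring_nf

lemma mgF_one : mgF δ 1 = 1 := by
  rw [mgF_eq, h2inv_one]
  rw [show δ + (1 - 2*δ) * (1/2) = 1/2 by ring, h2_half]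

include hδ0 hδh in
lemma h2_delta_lt_one : h2 δ < 1 := by
  rw [← h2_half]
  exact h2_strictMonoOn ⟨hδ0.le, hδh.le⟩ (by norm_num) hδh

include hδ0 hδh in
lemma mgF_surj_aux {b' : ℝ} (hb1 : h2 δ ≤ b') (hb2 : b' ≤ 1) :
    ∃ cc ∈ Icc (0:ℝ) 1, mgF δ cc = b' := by
  have hivt := intermediate_value_Icc (by linarith : δ ≤ 1/2) h2_continuous.continuousOn
  rw [h2_half] at hivt
  obtain ⟨s', hs', hs'b⟩ := hivt ⟨hb1, hb2⟩
  have hc : (0:ℝ) < 1 - 2*δ := by linarith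
  set r' := (s' - δ) / (1 - 2*δ) with hr'
  have hr0 : 0 ≤ r' := div_nonneg (by linarith [hs'.1]) hc.le
  have hrh : r' ≤ 1/2 := by
    rw [hr', div_le_iff₀ hc]; linarith [hs'.2]
  refine ⟨h2 r', h2_mem01 hr0 (by linarith), ?_⟩
  rw [mgF_eq, h2inv_h2 ⟨hr0, hrh⟩]
  rw [show δ + (1 - 2*δ) * r' = s' by rw [hr', mul_div_assoc', mul_div_cancel_left₀ _ hc.ne']; ring]
  exact hs'b

include hδ0 hδh in
lemma mgF_continuousOn : ContinuousOn (mgF δ) (Icc (0:ℝ) 1) := by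
  intro a ha
  rcases eq_or_lt_of_le ha.1 with h0 | h0
  · -- a = 0
    apply ContinuousWithinAt.mono _ Icc_subset_Ici_self
    rw [← h0]
    apply (mgF_strictMonoOn hδ0 hδh).continuousWithinAt_right_of_exists_between
      (Icc_mem_nhdsGE_of_mem ⟨le_refl 0, zero_lt_one⟩)
    intro b hb
    rw [mgF_zero] at hb
    obtain ⟨cc, hcc, hfcc⟩ := mgF_surj_aux hδ0 hδh (le_min hb.le ((h2_delta_lt_one hδ0 hδh).le))
      (min_le_right b 1)
    refine ⟨cc, hcc, ?_⟩
    rw [hfcc, mgF_zero]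
    exact ⟨lt_min hb (h2_delta_lt_one hδ0 hδh), min_le_left b 1⟩
  rcases eq_or_lt_of_le ha.2 with h1 | h1
  · -- a = 1
    apply ContinuousWithinAt.mono _ Icc_subset_Iic_self
    rw [h1]
    apply (mgF_strictMonoOn hδ0 hδh).continuousWithinAt_left_of_exists_between
      (Icc_mem_nhdsLE_of_mem ⟨zero_lt_one, le_refl 1⟩)
    intro b hb
    rw [mgF_one] at hb
    obtain ⟨cc, hcc, hfcc⟩ := mgF_surj_aux hδ0 hδh (le_max_right b (h2 δ))
      (max_le hb.le (h2_delta_lt_one hδ0 hδh).le)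
    refine ⟨cc, hcc, ?_⟩
    rw [hfcc, mgF_one]
    exact ⟨le_max_left b (h2 δ), max_lt hb (h2_delta_lt_one hδ0 hδh)⟩
  · exact (hasDerivAt_mgF hδ0 hδh ⟨h0, h1⟩).continuousAt.continuousWithinAt

include hδ0 hδh in
lemma mgF_convex_main : ConvexOn ℝ (Icc (0:ℝ) 1) (mgF δ) := by
  apply MonotoneOn.convexOn_of_deriv (convex_Icc 0 1) (mgF_continuousOn hδ0 hδh)
  · rw [interior_Icc]
    intro x hx
    exact (hasDerivAt_mgF hδ0 hδh hx).differentiableAt.differentiableWithinAt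
  · rw [interior_Icc]
    intro x hx y hy hxy
    rw [(hasDerivAt_mgF hδ0 hδh hx).deriv, (hasDerivAt_mgF hδ0 hδh hy).deriv]
    apply mul_le_mul_of_nonneg_left _ (by linarith : (0:ℝ) ≤ 1 - 2*δ)
    exact mgG_mono hδ0 hδh (h2inv_mem_Ioo hx) (h2inv_mem_Ioo hy)
      (h2inv_monotoneOn ⟨hx.1.le, hx.2.le⟩ ⟨hy.1.le, hy.2.le⟩ hxy)

end main2

lemma convexOn_congr {s : Set ℝ} {f g : ℝ → ℝ} (hs : Convex ℝ s) (h : ConvexOn ℝ s g)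
    (he : ∀ x ∈ s, f x = g x) : ConvexOn ℝ s f := by
  refine ⟨hs, fun x hx y hy a b ha hb hab => ?_⟩
  rw [he _ (hs hx hy ha hb hab), he _ hx, he _ hy]
  exact h.2 hx hy ha hb hab

lemma mgF_convex {δ : ℝ} (hδ : δ ∈ Icc (0:ℝ) (1/2)) :
    ConvexOn ℝ (Icc (0:ℝ) 1) (mgF δ) := by
  rcases hδ.1.eq_or_lt with h0 | h0
  · -- δ = 0
    apply convexOn_congr (convex_Icc 0 1) (convexOn_id (convex_Icc (0:ℝ) 1))
    intro x hx
    rw [mgF, ← h0, show bconv 0 (h2inv x) = h2inv x by unfold bconv; ring, h2_h2inv hx, id]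
  rcases hδ.2.eq_or_lt with h1 | h1
  · -- δ = 1/2
    apply convexOn_congr (convex_Icc 0 1) (convexOn_const 1 (convex_Icc (0:ℝ) 1))
    intro x hx
    rw [mgF, h1, show bconv (1/2) (h2inv x) = 1/2 by unfold bconv; ring, h2_half]
  · exact mgF_convex_main h0 h1

-- conditional probability P(X = true | W = w)
noncomputable def mgCP {Ω TW : Type*} [MeasurableSpace Ω] [Fintype TW]
    (μ : Measure Ω) (X : Ω → Bool) (W : Ω → TW) (w : TW) : ℝ :=
  if (μ (W ⁻¹' {w})).toReal = 0 then 0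
  else (μ ((fun ω => (X ω, W ω)) ⁻¹' {(true, w)})).toReal / (μ (W ⁻¹' {w})).toReal

lemma mg_sub1 {a c : ℝ} (ha : 0 ≤ a) (hc : c ≠ 0) :
    c * (a/c * Real.logb 2 (a/c)) = a * Real.logb 2 a - a * Real.logb 2 c := by
  rcases ha.eq_or_lt with h | h
  · simp [← h]
  · rw [Real.logb_div (ne_of_gt h) hc]
    field_simp

lemma mg_perw {pt pf : ℝ} (hpt : 0 ≤ pt) (hpf : 0 ≤ pf) :
    -(pt * Real.logb 2 pt) - pf * Real.logb 2 pf + (pt+pf) * Real.logb 2 (pt+pf)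
      = (pt+pf) * h2 (if (pt+pf) = 0 then 0 else pt/(pt+pf)) := by
  by_cases h : pt + pf = 0
  · have h1 : pt = 0 := by linarith
    have h2 : pf = 0 := by linarith
    simp [h, h1, h2]
  · rw [if_neg h]
    have h1x : 1 - pt/(pt+pf) = pf/(pt+pf) := by field_simp; ring
    unfold h2
    rw [h1x]
    have e1 := mg_sub1 hpt h
    have e2 := mg_sub1 hpf h
    have expand : (pt+pf) * (-(pt / (pt + pf) * Real.logb 2 (pt / (pt + pf)))
        - pf / (pt + pf) * Real.logb 2 (pf / (pt + pf)))
        = -((pt+pf) * (pt/(pt+pf) * Real.logb 2 (pt/(pt+pf))))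
          - ((pt+pf) * (pf/(pt+pf) * Real.logb 2 (pf/(pt+pf)))) := by ring
    rw [expand, e1, e2]
    ring

section meas
variable {Ω TW : Type*} [MeasurableSpace Ω] [Fintype TW]
    [MeasurableSpace TW] [MeasurableSingletonClass TW]
    (μ : Measure Ω) [IsProbabilityMeasure μ]

lemma mg_split {X : Ω → Bool} {W : Ω → TW} (hX : Measurable X) (hW : Measurable W) (w : TW) :
    (μ (W ⁻¹' {w})).toReal
      = (μ ((fun ω => (X ω, W ω)) ⁻¹' {(true, w)})).toReal
        + (μ ((fun ω => (X ω, W ω)) ⁻¹' {(false, w)})).toReal := by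
  have hset : W ⁻¹' {w} = (fun ω => (X ω, W ω)) ⁻¹' {(true, w)}
      ∪ (fun ω => (X ω, W ω)) ⁻¹' {(false, w)} := by
    ext ω
    simp only [Set.mem_preimage, Set.mem_singleton_iff, Set.mem_union, Prod.ext_iff]
    cases hb : X ω <;> simp
  have hdisj : Disjoint ((fun ω => (X ω, W ω)) ⁻¹' {(true, w)})
      ((fun ω => (X ω, W ω)) ⁻¹' {(false, w)}) := by
    rw [Set.disjoint_left]
    intro ω h1 h2
    simp only [Set.mem_preimage, Set.mem_singleton_iff, Prod.ext_iff] at h1 h2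
    rw [h1.1] at h2
    exact Bool.noConfusion h2.1
  have hmeas : MeasurableSet ((fun ω => (X ω, W ω)) ⁻¹' {(false, w)}) :=
    (hX.prodMk hW) (MeasurableSet.singleton _)
  rw [hset, measure_union hdisj hmeas, ENNReal.toReal_add (measure_ne_top μ _) (measure_ne_top μ _)]

lemma mg_condH2_bool {X : Ω → Bool} {W : Ω → TW} (hX : Measurable X) (hW : Measurable W) :
    condH2 μ X W = ∑ w : TW, (μ (W ⁻¹' {w})).toReal * h2 (mgCP μ X W w) := by
  have key : ∀ w : TW, (μ (W ⁻¹' {w})).toReal * h2 (mgCP μ X W w)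
      = -((μ ((fun ω => (X ω, W ω)) ⁻¹' {(true, w)})).toReal
            * Real.logb 2 (μ ((fun ω => (X ω, W ω)) ⁻¹' {(true, w)})).toReal)
        - (μ ((fun ω => (X ω, W ω)) ⁻¹' {(false, w)})).toReal
            * Real.logb 2 (μ ((fun ω => (X ω, W ω)) ⁻¹' {(false, w)})).toReal
        + (μ (W ⁻¹' {w})).toReal * Real.logb 2 (μ (W ⁻¹' {w})).toReal := by
    intro w
    rw [mgCP, mg_split μ hX hW w]
    exact (mg_perw ENNReal.toReal_nonneg ENNReal.toReal_nonneg).symm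
  simp only [condH2, H2]
  rw [Fintype.sum_prod_type, Fintype.sum_bool, Finset.sum_congr rfl (fun w _ => key w)]
  rw [Finset.sum_add_distrib, Finset.sum_sub_distrib]
  simp only [Finset.sum_neg_distrib]
  ring

lemma mg_sum_pw {W : Ω → TW} (hW : Measurable W) :
    ∑ w : TW, (μ (W ⁻¹' {w})).toReal = 1 := by
  have h := sum_measure_preimage_singleton (μ := μ) (f := W) Finset.univ
    (fun w _ => hW (MeasurableSet.singleton w))
  rw [Finset.coe_univ, Set.preimage_univ, measure_univ] at h
  rw [← ENNReal.toReal_sum (fun w _ => measure_ne_top μ _), h, ENNReal.toReal_one]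

lemma mgCP_mem {X : Ω → Bool} {W : Ω → TW} (hX : Measurable X) (hW : Measurable W) (w : TW) :
    mgCP μ X W w ∈ Icc (0:ℝ) 1 := by
  rw [mgCP]
  split_ifs with h
  · exact ⟨le_refl 0, zero_le_one⟩
  constructor
  · exact div_nonneg ENNReal.toReal_nonneg ENNReal.toReal_nonneg
  · rw [div_le_one (lt_of_le_of_ne ENNReal.toReal_nonneg (Ne.symm h))]
    rw [mg_split μ hX hW w]
    nlinarith [ENNReal.toReal_nonneg
      (a := μ ((fun ω => (X ω, W ω)) ⁻¹' {(false, w)}))]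

end meas

lemma mgF_h2 {δ y : ℝ} (hy : y ∈ Icc (0:ℝ) 1) : mgF δ (h2 y) = h2 (bconv δ y) := by
  rcases le_or_gt y (1/2) with h | h
  · rw [mgF, h2inv_h2 ⟨hy.1, h⟩]
  · rw [mgF, ← h2_one_sub y, h2inv_h2 ⟨by linarith [hy.2], by linarith⟩,
      show bconv δ (1-y) = 1 - bconv δ y by unfold bconv; ring, h2_one_sub]


/-- Witsenhausen's conditional entropy bound for the binary symmetric channel:
if `N ~ Ber(δ)` is independent of `(Y, W)` and `X = Y ⊕ N`, then
`H(X | W) ≥ h2(δ ⋆ h2⁻¹(H(Y | W)))`. -/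
theorem stmt16 {Ω TW : Type*} [MeasurableSpace Ω] [Fintype TW]
    [MeasurableSpace TW] [MeasurableSingletonClass TW]
    (μ : Measure Ω) [IsProbabilityMeasure μ]
    (δ : ℝ) (hδ : δ ∈ Set.Icc (0 : ℝ) (1 / 2))
    (Y : Ω → Bool) (W : Ω → TW) (N : Ω → Bool)
    (hY : Measurable Y) (hW : Measurable W) (hN : Measurable N)
    (hNp : (μ (N ⁻¹' {true})).toReal = δ)
    (hindep : ∀ (n y : Bool) (w : TW),
      (μ (N ⁻¹' {n} ∩ (fun ω => (Y ω, W ω)) ⁻¹' {(y, w)})).toReal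
        = (μ (N ⁻¹' {n})).toReal * (μ ((fun ω => (Y ω, W ω)) ⁻¹' {(y, w)})).toReal) :
    h2 (bconv δ (h2inv (condH2 μ Y W))) ≤ condH2 μ (fun ω => Y ω ^^ N ω) W := by
  set X : Ω → Bool := fun ω => Y ω ^^ N ω with hX_def
  have hX : Measurable X :=
    (measurable_of_countable (fun p : Bool × Bool => p.1 ^^ p.2)).comp (hY.prodMk hN)
  have hNf : (μ (N ⁻¹' {false})).toReal = 1 - δ := by
    have hunion : N ⁻¹' {true} ∪ N ⁻¹' {false} = Set.univ := by
      ext ω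
      simp only [Set.mem_preimage, Set.mem_singleton_iff, Set.mem_union, Set.mem_univ, iff_true]
      cases N ω <;> simp
    have hdisj : Disjoint (N ⁻¹' {true}) (N ⁻¹' {false}) := by
      rw [Set.disjoint_left]
      intro ω h1 h2
      simp only [Set.mem_preimage, Set.mem_singleton_iff] at h1 h2
      rw [h1] at h2; exact Bool.noConfusion h2
    have hu := measure_union (μ := μ) hdisj (hN (MeasurableSet.singleton false))
    rw [hunion, measure_univ] at hu
    have htr := congrArg ENNReal.toReal hu
    rw [ENNReal.toReal_one, ENNReal.toReal_add (measure_ne_top μ _) (measure_ne_top μ _)] at htr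
    linarith [hNp, htr]
  have hXtrue : ∀ w : TW, (μ ((fun ω => (X ω, W ω)) ⁻¹' {(true, w)})).toReal
      = δ * (μ ((fun ω => (Y ω, W ω)) ⁻¹' {(false, w)})).toReal
        + (1 - δ) * (μ ((fun ω => (Y ω, W ω)) ⁻¹' {(true, w)})).toReal := by
    intro w
    have hset : (fun ω => (X ω, W ω)) ⁻¹' {(true, w)}
        = (N ⁻¹' {true} ∩ (fun ω => (Y ω, W ω)) ⁻¹' {(false, w)})
          ∪ (N ⁻¹' {false} ∩ (fun ω => (Y ω, W ω)) ⁻¹' {(true, w)}) := by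
      ext ω
      simp only [Set.mem_preimage, Set.mem_singleton_iff, Set.mem_union, Set.mem_inter_iff,
        Prod.ext_iff, hX_def]
      cases hy : Y ω <;> cases hn : N ω <;> simp
    have hdisj : Disjoint (N ⁻¹' {true} ∩ (fun ω => (Y ω, W ω)) ⁻¹' {(false, w)})
        (N ⁻¹' {false} ∩ (fun ω => (Y ω, W ω)) ⁻¹' {(true, w)}) := by
      rw [Set.disjoint_left]
      rintro ω ⟨h1, -⟩ ⟨h2, -⟩
      simp only [Set.mem_preimage, Set.mem_singleton_iff] at h1 h2
      rw [h1] at h2; exact Bool.noConfusion h2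
    have hmeas : MeasurableSet (N ⁻¹' {false} ∩ (fun ω => (Y ω, W ω)) ⁻¹' {(true, w)}) :=
      (hN (MeasurableSet.singleton false)).inter
        ((hY.prodMk hW) (MeasurableSet.singleton _))
    rw [hset, measure_union hdisj hmeas,
      ENNReal.toReal_add (measure_ne_top μ _) (measure_ne_top μ _),
      hindep true false w, hindep false true w, hNp, hNf]
    try ring
  have hterm : ∀ w : TW, (μ (W ⁻¹' {w})).toReal * h2 (mgCP μ X W w)
      = (μ (W ⁻¹' {w})).toReal * mgF δ (h2 (mgCP μ Y W w)) := by
    intro w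
    by_cases hpw : (μ (W ⁻¹' {w})).toReal = 0
    · rw [hpw, zero_mul, zero_mul]
    · have hcp : mgCP μ X W w = bconv δ (mgCP μ Y W w) := by
        rw [mgCP, mgCP, if_neg hpw, if_neg hpw, hXtrue w, bconv]
        have hsplitY := mg_split μ hY hW w
        rw [hsplitY] at hpw ⊢
        field_simp
        try ring
      rw [hcp, mgF_h2 (mgCP_mem μ hY hW w)]
  have hqmem : ∀ w : TW, h2 (mgCP μ Y W w) ∈ Icc (0:ℝ) 1 := fun w =>
    h2_mem01 (mgCP_mem μ hY hW w).1 (mgCP_mem μ hY hW w).2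
  have jensen := (mgF_convex hδ).map_sum_le (t := Finset.univ)
      (w := fun w => (μ (W ⁻¹' {w})).toReal) (p := fun w => h2 (mgCP μ Y W w))
      (fun w _ => ENNReal.toReal_nonneg) (mg_sum_pw μ hW) (fun w _ => hqmem w)
  simp only [smul_eq_mul] at jensen
  calc h2 (bconv δ (h2inv (condH2 μ Y W))) = mgF δ (condH2 μ Y W) := rfl
    _ = mgF δ (∑ w : TW, (μ (W ⁻¹' {w})).toReal * h2 (mgCP μ Y W w)) := by
          rw [mg_condH2_bool μ hY hW]
    _ ≤ ∑ w : TW, (μ (W ⁻¹' {w})).toReal * mgF δ (h2 (mgCP μ Y W w)) := jensen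
    _ = ∑ w : TW, (μ (W ⁻¹' {w})).toReal * h2 (mgCP μ X W w) :=
          (Finset.sum_congr rfl (fun w _ => hterm w)).symm
    _ = condH2 μ X W := (mg_condH2_bool μ hX hW).symm
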